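/- Let α, α', β, β' ∈ ℂ and let (P_n)_{n≥0} be the monic polynomials in ℂ[x] defined by P_0 = 1, P_1(x) = x − (α − α'), P_2(x) = (x − α) P_1(x) − (β − β') P_0(x), and P_{n+1}(x) = (x − α) P_n(x) − β P_{n−1}(x) for n ≥ 2. Then the following identity holds in ℂ[x][[z]]: (1 + α z + β z² − x z) · Σ_{n≥0} P_n(x) z^n = 1 + α' z + β' z². -/

import Mathlib

open PowerSeries

/-- the generating function identity
`(1 + α z + β z² − x z) · Σ P_n(x) zⁿ = 1 + α' z + β' z²` for the free Meixner type recursion. -/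
theorem stmt_1 (a a' b b' : ℂ) (P : ℕ → Polynomial ℂ)
    (hP0 : P 0 = 1)
    (hP1 : P 1 = Polynomial.X - Polynomial.C (a - a'))
    (hP2 : P 2 = (Polynomial.X - Polynomial.C a) * P 1 - Polynomial.C (b - b') * P 0)
    (hPrec : ∀ n, 2 ≤ n →
      P (n + 1) = (Polynomial.X - Polynomial.C a) * P n - Polynomial.C b * P (n - 1)) :
    (1 + PowerSeries.C (R := Polynomial ℂ) (Polynomial.C a) * PowerSeries.X
       + PowerSeries.C (R := Polynomial ℂ) (Polynomial.C b) * PowerSeries.X ^ 2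
       - PowerSeries.C (R := Polynomial ℂ) Polynomial.X * PowerSeries.X) *
      PowerSeries.mk (fun n => P n)
    = 1 + PowerSeries.C (R := Polynomial ℂ) (Polynomial.C a') * PowerSeries.X
        + PowerSeries.C (R := Polynomial ℂ) (Polynomial.C b') * PowerSeries.X ^ 2 := by
  apply PowerSeries.ext
  intro n
  have hx2 : (PowerSeries.X : PowerSeries (Polynomial ℂ))^2 = X * X := sq X
  simp only [add_mul, sub_mul, one_mul, map_add, map_sub, hx2, mul_assoc]
  match n with
  | 0 =>
    simp only [PowerSeries.coeff_zero_eq_constantCoeff, map_mul, map_one,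
      constantCoeff_X, mul_zero, zero_mul, constantCoeff_C, constantCoeff_mk,
      PowerSeries.constantCoeff_mk, hP0, map_sub, map_add]
    simp [hP0]
  | 1 =>
    simp only [PowerSeries.coeff_C_mul, PowerSeries.coeff_succ_X_mul, PowerSeries.coeff_mk,
      PowerSeries.coeff_one, PowerSeries.coeff_C, PowerSeries.coeff_X]
    simp [hP0, hP1]
    ring
  | 2 =>
    simp only [PowerSeries.coeff_C_mul, PowerSeries.coeff_succ_X_mul, PowerSeries.coeff_mk,
      PowerSeries.coeff_one, PowerSeries.coeff_C, PowerSeries.coeff_X]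
    simp [hP0, hP1, hP2]
    ring
  | (n+3) =>
    have h := hPrec (n+2) (by omega)
    simp only [show n+3 = (n+2)+1 from rfl, PowerSeries.coeff_C_mul,
      PowerSeries.coeff_succ_X_mul, PowerSeries.coeff_mk,
      PowerSeries.coeff_one, PowerSeries.coeff_C, PowerSeries.coeff_X]
    simp only [show n+2-1 = n+1 from rfl] at h
    simp [h]
    ring
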